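/- Let H be a separable Hilbert space with orthonormal system (eᵢ) of functions on a set X, and suppose there is c > 0 such that for every n, sup{‖Σᵢ₌₁ⁿ cᵢeᵢ‖_∞ : Σcᵢ² = 1} ≥ c√(s(n)) for an increasing function s. Let (μᵢ) be a nonincreasing positive sequence and ψ a nondecreasing positive function with M := sup_x Σᵢ ψ(μᵢ)eᵢ(x)² < ∞. Then for every n, ψ(μ_n) ≤ M/(c² s(n)), i.e. μ_n ≤ ψ^{-1}(M/(c² s(n))). -/

import Mathlib

open MeasureTheory

/-- Eigenvalue upper bound from the Christoffel-function lower bound: if the orthonormal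
system `(eᵢ)` in `L²(ν)` satisfies `sup{‖∑ᵢ₌₁ⁿ cᵢ eᵢ‖_∞ : ∑cᵢ² = 1} ≥ c√(s n)`, the
`(μᵢ)` are nonincreasing positive, `ψ` is nondecreasing positive, and
`M = sup_x ∑ᵢ ψ(μᵢ) eᵢ(x)² < ∞`, then `ψ(μₙ) ≤ M/(c² s(n))` for every `n ≥ 1`. -/
theorem eigenvalue_upper_bound {X : Type*} [MeasurableSpace X] (ν : Measure X)
    (e : ℕ → X → ℝ) (heL2 : ∀ i, MemLp (e i) 2 ν)
    (horth : ∀ i j, (∫ x, e i x * e j x ∂ν) = if i = j then 1 else 0)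
    (s : ℕ → ℝ) (hspos : ∀ n, 0 < s n) (hsmono : StrictMono s)
    (c : ℝ) (hc : 0 < c)
    (hchristoffel : ∀ n : ℕ, 1 ≤ n →
      c * Real.sqrt (s n) ≤
        sSup {r : ℝ | ∃ co : ℕ → ℝ, (∑ i ∈ Finset.Icc 1 n, (co i) ^ 2) = 1 ∧
          r = ⨆ x : X, |∑ i ∈ Finset.Icc 1 n, co i * e i x|})
    (μ : ℕ → ℝ) (hμpos : ∀ i, 0 < μ i) (hμanti : Antitone μ)
    (ψ : ℝ → ℝ) (hψpos : ∀ t, 0 < t → 0 < ψ t) (hψmono : MonotoneOn ψ (Set.Ioi 0))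
    (M : ℝ)
    (hsummable : ∀ x, Summable fun i : ℕ => ψ (μ i) * (e i x) ^ 2)
    (hM : ∀ x, (∑' i : ℕ, ψ (μ i) * (e i x) ^ 2) ≤ M) :
    ∀ n : ℕ, 1 ≤ n → ψ (μ n) ≤ M / (c ^ 2 * s n) := by
  intro n hn
  have hψμ : ∀ i, 0 < ψ (μ i) := fun i => hψpos _ (hμpos i)
  have hψn : 0 < ψ (μ n) := hψμ n
  have hsqs : 0 < Real.sqrt (s n) := Real.sqrt_pos.mpr (hspos n)
  cases isEmpty_or_nonempty X with
  | inl h =>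
    exfalso
    have h1 := hchristoffel n hn
    have h2 : sSup {r : ℝ | ∃ co : ℕ → ℝ, (∑ i ∈ Finset.Icc 1 n, (co i) ^ 2) = 1 ∧
        r = ⨆ x : X, |∑ i ∈ Finset.Icc 1 n, co i * e i x|} ≤ 0 := by
      apply Real.sSup_le _ le_rfl
      rintro r ⟨co, hco, rfl⟩
      rw [Real.iSup_of_isEmpty]
    have := h1.trans h2
    nlinarith
  | inr h =>
    obtain ⟨x0⟩ := h
    have hM0 : 0 ≤ M :=
      le_trans (tsum_nonneg fun i => mul_nonneg (hψμ i).le (sq_nonneg _)) (hM x0)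
    set B := Real.sqrt (M / ψ (μ n)) with hB
    have hB0 : 0 ≤ B := Real.sqrt_nonneg _
    have key : ∀ r ∈ {r : ℝ | ∃ co : ℕ → ℝ, (∑ i ∈ Finset.Icc 1 n, (co i) ^ 2) = 1 ∧
        r = ⨆ x : X, |∑ i ∈ Finset.Icc 1 n, co i * e i x|}, r ≤ B := by
      rintro r ⟨co, hco, rfl⟩
      apply Real.iSup_le _ hB0
      intro x
      have ht2 : (∑ i ∈ Finset.Icc 1 n, co i * e i x) ^ 2 ≤ M / ψ (μ n) := by
        have hcs := Finset.sum_mul_sq_le_sq_mul_sq (Finset.Icc 1 n)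
          (fun i => co i / Real.sqrt (ψ (μ i))) (fun i => Real.sqrt (ψ (μ i)) * e i x)
        have heq : ∀ i ∈ Finset.Icc 1 n,
            co i / Real.sqrt (ψ (μ i)) * (Real.sqrt (ψ (μ i)) * e i x) = co i * e i x := by
          intro i _
          have : Real.sqrt (ψ (μ i)) ≠ 0 := (Real.sqrt_pos.mpr (hψμ i)).ne'
          field_simp
        rw [Finset.sum_congr rfl heq] at hcs
        have h1 : (∑ i ∈ Finset.Icc 1 n, (co i / Real.sqrt (ψ (μ i))) ^ 2) ≤ 1 / ψ (μ n) := by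
          have : ∀ i ∈ Finset.Icc 1 n,
              (co i / Real.sqrt (ψ (μ i))) ^ 2 ≤ (co i) ^ 2 / ψ (μ n) := by
            intro i hi
            rw [div_pow, Real.sq_sqrt (hψμ i).le]
            apply div_le_div_of_nonneg_left (sq_nonneg _) hψn
            exact hψmono (hμpos n) (hμpos i) (hμanti (Finset.mem_Icc.mp hi).2)
          calc (∑ i ∈ Finset.Icc 1 n, (co i / Real.sqrt (ψ (μ i))) ^ 2)
              ≤ ∑ i ∈ Finset.Icc 1 n, (co i) ^ 2 / ψ (μ n) := Finset.sum_le_sum this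
            _ = 1 / ψ (μ n) := by rw [← Finset.sum_div, hco]
        have h2 : (∑ i ∈ Finset.Icc 1 n, (Real.sqrt (ψ (μ i)) * e i x) ^ 2) ≤ M := by
          have heq2 : ∀ i ∈ Finset.Icc 1 n,
              (Real.sqrt (ψ (μ i)) * e i x) ^ 2 = ψ (μ i) * (e i x) ^ 2 := by
            intro i _
            rw [mul_pow, Real.sq_sqrt (hψμ i).le]
          rw [Finset.sum_congr rfl heq2]
          exact le_trans (Summable.sum_le_tsum _ (fun i _ => mul_nonneg (hψμ i).le (sq_nonneg _))
            (hsummable x)) (hM x)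
        calc (∑ i ∈ Finset.Icc 1 n, co i * e i x) ^ 2
            ≤ (∑ i ∈ Finset.Icc 1 n, (co i / Real.sqrt (ψ (μ i))) ^ 2) *
              (∑ i ∈ Finset.Icc 1 n, (Real.sqrt (ψ (μ i)) * e i x) ^ 2) := hcs
          _ ≤ (1 / ψ (μ n)) * M := by
              apply mul_le_mul h1 h2 (Finset.sum_nonneg fun i _ => sq_nonneg _)
              positivity
          _ = M / ψ (μ n) := by ring
      calc |∑ i ∈ Finset.Icc 1 n, co i * e i x|
          = Real.sqrt ((∑ i ∈ Finset.Icc 1 n, co i * e i x) ^ 2) :=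
            (Real.sqrt_sq_eq_abs _).symm
        _ ≤ B := Real.sqrt_le_sqrt ht2
    have hfin : c * Real.sqrt (s n) ≤ B := (hchristoffel n hn).trans (Real.sSup_le key hB0)
    have hsq : (c * Real.sqrt (s n)) ^ 2 ≤ B ^ 2 :=
      pow_le_pow_left₀ (by positivity) hfin 2
    rw [hB, Real.sq_sqrt (by positivity), mul_pow, Real.sq_sqrt (hspos n).le] at hsq
    rw [le_div_iff₀ (mul_pos (pow_pos hc 2) (hspos n))]
    calc ψ (μ n) * (c ^ 2 * s n) ≤ ψ (μ n) * (M / ψ (μ n)) := by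
          apply mul_le_mul_of_nonneg_left hsq hψn.le
      _ = M := by field_simp
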